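/- Let A be an n×n complex matrix of index k and let m ≥ 1 be an integer. Then A^{#_m} = 0 if and only if A^k = 0. -/
import Mathlib

open Matrix

/-- `X` is the Moore–Penrose inverse of `A` (four Penrose equations). -/
def MoorePenroseOf {n : ℕ} (A X : Matrix (Fin n) (Fin n) ℂ) : Prop :=
  A * X * A = A ∧ X * A * X = X ∧ (A * X)ᴴ = A * X ∧ (X * A)ᴴ = X * A

/-- Column space of a square complex matrix. -/
noncomputable def colSpace {n : ℕ} (A : Matrix (Fin n) (Fin n) ℂ) : Submodule ℂ (Fin n → ℂ) :=
  LinearMap.range A.mulVecLin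

/-- Null space of a square complex matrix. -/
noncomputable def nullSpace {n : ℕ} (A : Matrix (Fin n) (Fin n) ℂ) : Submodule ℂ (Fin n → ℂ) :=
  LinearMap.ker A.mulVecLin

/-- `k` is the index of `A`: the smallest nonnegative integer with
`rank(A^k) = rank(A^(k+1))`. -/
def HasIndex {n : ℕ} (A : Matrix (Fin n) (Fin n) ℂ) (k : ℕ) : Prop :=
  (A ^ k).rank = (A ^ (k + 1)).rank ∧ ∀ j < k, (A ^ j).rank ≠ (A ^ (j + 1)).rank

/-- `X` is the core-EP inverse of `A` (where `k = Ind(A)`): `XAX = X` and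
`R(X) = R(Xᴴ) = R(A^k)`. -/
def IsCoreEP {n : ℕ} (A X : Matrix (Fin n) (Fin n) ℂ) (k : ℕ) : Prop :=
  X * A * X = X ∧ colSpace X = colSpace (A ^ k) ∧ colSpace Xᴴ = colSpace (A ^ k)

lemma colSpace_mul_le {n : ℕ} (A B : Matrix (Fin n) (Fin n) ℂ) :
    colSpace (A * B) ≤ colSpace A := by
  simp only [colSpace, Matrix.mulVecLin_mul, LinearMap.range_comp]
  exact LinearMap.map_le_range

lemma colSpace_eq_bot_iff {n : ℕ} (A : Matrix (Fin n) (Fin n) ℂ) :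
    colSpace A = ⊥ ↔ A = 0 := by
  constructor
  · intro h
    have h0 : A.mulVecLin = 0 := LinearMap.range_eq_bot.mp h
    apply Matrix.toLin'.injective
    rw [Matrix.toLin'_apply', Matrix.toLin'_apply', h0, Matrix.mulVecLin_zero]
  · rintro rfl
    rw [colSpace, LinearMap.range_eq_bot, Matrix.mulVecLin_zero]

/-- Range stabilization: `R(A^(k+j)) = R(A^k)` for all `j`, given the index hypothesis. -/
lemma colSpace_pow_stab {n k : ℕ} {A : Matrix (Fin n) (Fin n) ℂ}
    (h : (A ^ k).rank = (A ^ (k + 1)).rank) :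
    ∀ j, colSpace (A ^ (k + j)) = colSpace (A ^ k) := by
  have h1 : colSpace (A ^ (k + 1)) = colSpace (A ^ k) := by
    have hle : colSpace (A ^ (k + 1)) ≤ colSpace (A ^ k) := by
      have : A ^ (k + 1) = A ^ k * A := pow_succ A k
      rw [this]; exact colSpace_mul_le _ _
    exact Submodule.eq_of_le_of_finrank_le hle h.le
  intro j
  induction j with
  | zero => rfl
  | succ j ih =>
    have hmul : A ^ (k + (j + 1)) = A * A ^ (k + j) := by
      rw [← pow_succ' A (k + j)]; ring_nf
    have hmul1 : A ^ (k + 1) = A * A ^ k := (pow_succ' A k)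
    calc colSpace (A ^ (k + (j + 1)))
        = Submodule.map A.mulVecLin (colSpace (A ^ (k + j))) := by
          rw [hmul]; simp [colSpace, Matrix.mulVecLin_mul, LinearMap.range_comp]
      _ = Submodule.map A.mulVecLin (colSpace (A ^ k)) := by rw [ih]
      _ = colSpace (A ^ (k + 1)) := by
          rw [hmul1]; simp [colSpace, Matrix.mulVecLin_mul, LinearMap.range_comp]
      _ = colSpace (A ^ k) := h1

/-- If `XAX = X` and `colSpace M ≤ colSpace X` then `X * A * M = M`. -/
lemma proj_eq {n : ℕ} {X A M : Matrix (Fin n) (Fin n) ℂ}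
    (hX : X * A * X = X) (hle : colSpace M ≤ colSpace X) :
    X * A * M = M := by
  apply Matrix.toLin'.injective
  rw [Matrix.toLin'_apply', Matrix.toLin'_apply']
  refine LinearMap.ext fun v => ?_
  obtain ⟨u, hu⟩ := hle ⟨v, rfl⟩
  calc (X * A * M).mulVecLin v = (X * A).mulVecLin (M.mulVecLin v) := by
        simp [Matrix.mulVecLin_mul]
    _ = (X * A).mulVecLin (X.mulVecLin u) := by rw [hu]
    _ = (X * A * X).mulVecLin u := by simp [Matrix.mulVecLin_mul]
    _ = M.mulVecLin v := by rw [hX, hu]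

/-- `A^{#_m} = 0` iff `A^k = 0`. -/
theorem stmt_18 {n k m : ℕ} (hm : 1 ≤ m)
    (A CEP AmDag : Matrix (Fin n) (Fin n) ℂ)
    (hInd : HasIndex A k)
    (hCEP : IsCoreEP A CEP k)
    (hMP : MoorePenroseOf (A ^ m) AmDag) :
    CEP ^ (m + 1) * A ^ m * (A ^ m * AmDag) = 0 ↔ A ^ k = 0 := by
  obtain ⟨hXAX, hR, _⟩ := hCEP
  have hstab := colSpace_pow_stab hInd.1
  constructor
  · intro h0
    -- multiply on the right by A^m to kill the projector
    have h1 : CEP ^ (m + 1) * A ^ (2 * m) = 0 := by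
      have := congrArg (· * A ^ m) h0
      simp only [zero_mul] at this
      calc CEP ^ (m + 1) * A ^ (2 * m)
          = CEP ^ (m + 1) * A ^ m * (A ^ m * AmDag) * A ^ m := by
            rw [mul_assoc (CEP ^ (m + 1) * A ^ m), hMP.1, mul_assoc, ← pow_add, two_mul]
        _ = 0 := this
    -- key: CEP^j * A^(k + (m-1) + j) = A^(k + (m-1))
    have key : ∀ j, CEP ^ j * A ^ (k + (m - 1) + j) = A ^ (k + (m - 1)) := by
      intro j
      induction j with
      | zero => simp
      | succ j ih =>
        have hc : colSpace (A ^ (k + (m - 1) + j)) ≤ colSpace CEP := by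
          rw [hR, add_assoc, hstab ((m - 1) + j)]
        calc CEP ^ (j + 1) * A ^ (k + (m - 1) + (j + 1))
            = CEP ^ j * (CEP * A * A ^ (k + (m - 1) + j)) := by
              rw [show k + (m - 1) + (j + 1) = (k + (m - 1) + j) + 1 by omega,
                pow_succ CEP j, pow_succ' A, mul_assoc, ← mul_assoc CEP A]
          _ = CEP ^ j * A ^ (k + (m - 1) + j) := by rw [proj_eq hXAX hc]
          _ = A ^ (k + (m - 1)) := ih
    have hexp : k + (m - 1) + (m + 1) = 2 * m + k := by omega
    have h2 : A ^ (k + (m - 1)) = 0 := by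
      rw [← key (m + 1), hexp, pow_add A (2 * m) k, ← mul_assoc, h1, zero_mul]
    -- colSpace (A^(k + (m-1))) = colSpace (A^k)
    have h3 : colSpace (A ^ k) = ⊥ := by
      rw [← hstab (m - 1), h2]
      exact (colSpace_eq_bot_iff _).mpr rfl
    exact (colSpace_eq_bot_iff _).mp h3
  · intro hAk
    have hX0 : CEP = 0 := by
      apply (colSpace_eq_bot_iff _).mp
      rw [hR, hAk]
      exact (colSpace_eq_bot_iff _).mpr rfl
    rw [hX0, zero_pow (by omega), zero_mul, zero_mul]
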